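/- arXiv:1008.1659 — 3 statements merged into one kernel-verified Lean document; each statement's English description precedes it below -/
import Mathlib

section
/- The set of prefixes of words in P_q* equals the set of prefixes of words in Q_q, and both equal P_q* · Pref(q). -/
/-- `u ^ n` for lists: concatenation of `n` copies of `u`. -/
def listPow {X : Type*} (u : List X) : ℕ → List X
  | 0 => []
  | n+1 => u ++ listPow u n

/-- `P_q = { v : e ⊏ v ⊑ q ⊏ v·q }`. -/
def Pq {X : Type*} (q : List X) : Set (List X) :=
  {v | v ≠ [] ∧ v <+: q ∧ q <+: v ++ q}

/-- membership in the submonoid `P^*` generated by `P`. -/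
def InStar {X : Type*} (P : Set (List X)) (w : List X) : Prop :=
  ∃ l : List (List X), (∀ v ∈ l, v ∈ P) ∧ w = l.flatten

/-- A finite word `w` is quasiperiodic with quasiperiod `q`. -/
def QuasiPeriodic {X : Type*} (q w : List X) : Prop :=
  ∀ j < w.length, ∃ u : List X, u.length ≤ j ∧ j < u.length + q.length ∧ (u ++ q) <+: w

/-- `Q_q`: the set of finite words quasiperiodic with quasiperiod `q`. -/
def Qq {X : Type*} (q : List X) : Set (List X) := {w | QuasiPeriodic q w}

/-- `u` is a (finite) prefix of the infinite word `ξ`. -/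
def InfPrefix {X : Type*} (ξ : ℕ → X) (u : List X) : Prop :=
  u = (List.range u.length).map ξ

/-- An infinite word `ξ` is quasiperiodic with quasiperiod `q`. -/
def QuasiPeriodicInf {X : Type*} (q : List X) (ξ : ℕ → X) : Prop :=
  ∀ j : ℕ, ∃ u : List X, u.length ≤ j ∧ j < u.length + q.length ∧ InfPrefix ξ (u ++ q)

/-- the star root `P \ (P²·P*)`. -/
def StarRoot {X : Type*} (P : Set (List X)) : Set (List X) :=
  {v | v ∈ P ∧ ¬ ∃ (a b : List X) (l : List (List X)),
    a ∈ P ∧ b ∈ P ∧ (∀ x ∈ l, x ∈ P) ∧ v = a ++ b ++ l.flatten}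

/-- `ξ ∈ P^ω`: infinite concatenation of nonempty words of `P`. -/
def InOmega {X : Type*} (P : Set (List X)) (ξ : ℕ → X) : Prop :=
  ∃ f : ℕ → List X, (∀ i, f i ∈ P ∧ f i ≠ []) ∧
    ∀ n, InfPrefix ξ ((List.range n).map f).flatten

private lemma flatten_pref {X : Type*} {q : List X} :
    ∀ l : List (List X), (∀ v ∈ l, v ∈ Pq q) → q <+: l.flatten ++ q := by
  intro l
  induction l with
  | nil => intro _; simp
  | cons v t ih =>
    intro hl
    obtain ⟨r, hr⟩ := ih (fun x hx => hl x (List.mem_cons_of_mem _ hx))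
    have hv := hl v List.mem_cons_self
    have heq : (v :: t).flatten ++ q = (v ++ q) ++ r := by
      simp [← hr]
    rw [heq]
    exact hv.2.2.trans (List.prefix_append _ _)

private lemma flatten_qp {X : Type*} {q : List X} :
    ∀ l : List (List X), (∀ v ∈ l, v ∈ Pq q) → QuasiPeriodic q (l.flatten ++ q) := by
  intro l
  induction l with
  | nil =>
    intro _ j hj
    exact ⟨[], Nat.zero_le _, by simpa using hj, by simp⟩
  | cons v t ih =>
    intro hl j hj
    have hv := hl v List.mem_cons_self
    have ht : ∀ x ∈ t, x ∈ Pq q := fun x hx => hl x (List.mem_cons_of_mem _ hx)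
    have hih := ih ht
    have heq : (v :: t).flatten ++ q = v ++ (t.flatten ++ q) := by simp
    by_cases hjv : j < v.length
    · refine ⟨[], Nat.zero_le _, ?_, ?_⟩
      · have := hv.2.1.length_le
        simpa using lt_of_lt_of_le hjv this
      · obtain ⟨r, hr⟩ := flatten_pref t ht
        have : (v :: t).flatten ++ q = (v ++ q) ++ r := by simp [← hr]
        rw [this]
        simpa using hv.2.2.trans (List.prefix_append _ _)
    · push_neg at hjv
      have hj' : j - v.length < (t.flatten ++ q).length := by
        rw [heq] at hj
        simp only [List.length_append] at hj ⊢
        omega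
      obtain ⟨u, hu1, hu2, hu3⟩ := hih (j - v.length) hj'
      refine ⟨v ++ u, ?_, ?_, ?_⟩
      · simp only [List.length_append]; omega
      · simp only [List.length_append]; omega
      · rw [heq, List.append_assoc]
        exact (List.prefix_append_right_inj v).mpr hu3

private lemma occ_star {X : Type*} {q w : List X} (hq : q ≠ []) (hw : QuasiPeriodic q w) :
    ∀ n (u : List X), u.length = n → u ++ q <+: w → InStar (Pq q) u := by
  intro n
  induction n using Nat.strong_induction_on with
  | _ n ih =>
    intro u hn huw
    rcases eq_or_ne u [] with rfl | hune
    · exact ⟨[], by simp, rfl⟩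
    · have hul : 0 < u.length := List.length_pos_iff.mpr hune
      have hql : 0 < q.length := List.length_pos_iff.mpr hq
      have hjw : u.length - 1 < w.length := by
        have := huw.length_le
        simp only [List.length_append] at this
        omega
      obtain ⟨u₀, h1, h2, h3⟩ := hw (u.length - 1) hjw
      -- u₀ <+: u
      have hu₀u : u₀ <+: u :=
        List.prefix_of_prefix_length_le (((List.prefix_append u₀ q).trans h3))
          (((List.prefix_append u q).trans huw)) (by omega)
      obtain ⟨p, hp⟩ := hu₀u
      have hpne : p ≠ [] := by
        intro h
        rw [h, List.append_nil] at hp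
        have : u₀.length = u.length := by rw [hp]
        omega
      -- u ++ q <+: u₀ ++ q ++ ?  : u <+: u₀ ++ q
      have huq : u <+: u₀ ++ q :=
        List.prefix_of_prefix_length_le (((List.prefix_append u q).trans huw)) h3
          (by simp only [List.length_append]; omega)
      have hpq : p <+: q := by
        rw [← hp] at huq
        exact (List.prefix_append_right_inj u₀).mp huq
      -- q <+: p ++ q
      have hqpq : q <+: p ++ q := by
        have h4 : u₀ ++ q <+: u₀ ++ (p ++ q) := by
          refine List.prefix_of_prefix_length_le h3 ?_ ?_
          · rw [← List.append_assoc, hp]; exact huw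
          · simp only [List.length_append]; omega
        exact (List.prefix_append_right_inj u₀).mp h4
      have hpPq : p ∈ Pq q := ⟨hpne, hpq, hqpq⟩
      have hu₀star : InStar (Pq q) u₀ := by
        exact ih u₀.length (by omega) u₀ rfl h3
      obtain ⟨l, hl, hlf⟩ := hu₀star
      refine ⟨l ++ [p], ?_, ?_⟩
      · intro x hx
        rcases List.mem_append.mp hx with h | h
        · exact hl x h
        · simp only [List.mem_singleton] at h; exact h ▸ hpPq
      · simp [← hlf, ← hp]

/-- `Pref(P_q^*) = Pref(Q_q) = P_q^*·Pref(q)`. -/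
theorem stmt4 {X : Type*} (q : List X) (hq : q ≠ []) :
    {u : List X | ∃ w, InStar (Pq q) w ∧ u <+: w} = {u : List X | ∃ w ∈ Qq q, u <+: w} ∧
    {u : List X | ∃ w ∈ Qq q, u <+: w} =
      {u : List X | ∃ v p : List X, InStar (Pq q) v ∧ p <+: q ∧ u = v ++ p} := by
  have hqPq : q ∈ Pq q := ⟨hq, List.prefix_rfl, List.prefix_append _ _⟩
  have h12 : {u : List X | ∃ w, InStar (Pq q) w ∧ u <+: w} ⊆
      {u : List X | ∃ w ∈ Qq q, u <+: w} := by
    rintro u ⟨w, ⟨l, hl, rfl⟩, huw⟩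
    exact ⟨l.flatten ++ q, flatten_qp l hl, huw.trans (List.prefix_append _ _)⟩
  have h23 : {u : List X | ∃ w ∈ Qq q, u <+: w} ⊆
      {u : List X | ∃ v p : List X, InStar (Pq q) v ∧ p <+: q ∧ u = v ++ p} := by
    rintro u ⟨w, hw, huw⟩
    rcases eq_or_ne u [] with rfl | hune
    · exact ⟨[], [], ⟨[], by simp, rfl⟩, List.nil_prefix, rfl⟩
    · have hul : 0 < u.length := List.length_pos_iff.mpr hune
      have hjw : u.length - 1 < w.length := by
        have := huw.length_le; omega
      obtain ⟨u₀, h1, h2, h3⟩ := hw (u.length - 1) hjw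
      have hu₀star : InStar (Pq q) u₀ :=
        occ_star hq hw u₀.length u₀ rfl h3
      have hu₀u : u₀ <+: u :=
        List.prefix_of_prefix_length_le (((List.prefix_append u₀ q).trans h3)) huw (by omega)
      obtain ⟨p, hp⟩ := hu₀u
      have huq : u <+: u₀ ++ q :=
        List.prefix_of_prefix_length_le huw h3 (by simp only [List.length_append]; omega)
      have hpq : p <+: q := by
        rw [← hp] at huq
        exact (List.prefix_append_right_inj u₀).mp huq
      exact ⟨u₀, p, hu₀star, hpq, hp.symm⟩
  have h31 : {u : List X | ∃ v p : List X, InStar (Pq q) v ∧ p <+: q ∧ u = v ++ p} ⊆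
      {u : List X | ∃ w, InStar (Pq q) w ∧ u <+: w} := by
    rintro u ⟨v, p, ⟨l, hl, rfl⟩, hpq, rfl⟩
    refine ⟨l.flatten ++ q, ⟨l ++ [q], ?_, by simp⟩, ?_⟩
    · intro x hx
      rcases List.mem_append.mp hx with h | h
      · exact hl x h
      · simp only [List.mem_singleton] at h; exact h ▸ hqPq
    · exact (List.prefix_append_right_inj l.flatten).mpr hpq
  constructor
  · exact Set.Subset.antisymm h12 (fun u hu => h31 (h23 hu))
  · exact Set.Subset.antisymm h23 (fun u hu => h12 (h31 hu))
end

section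
/- If q = q_0^k · q̄ with q̄ a proper prefix of q_0, then the star root of P_q is a code with delay of decipherability at most k+1: for all v, v', w_1, ..., w_{k+1}, w'_1, ..., w'_{k+1} in the star root of P_q, if v·w_1⋯w_{k+1} and v'·w'_1⋯w'_{k+1} are comparable with respect to the prefix order, then v = v'. -/
lemma listPow_length {X : Type*} (u : List X) : ∀ n, (listPow u n).length = n * u.length
  | 0 => by simp [listPow]
  | n+1 => by simp [listPow, listPow_length u n]; ring

lemma flatten_q_prefix {X : Type*} (q : List X) :
    ∀ l : List (List X), (∀ v ∈ l, v ∈ Pq q) → q <+: l.flatten ++ q := by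
  intro l
  induction l with
  | nil => simp
  | cons a t ih =>
    intro hl
    have ha := (hl a (by simp)).2.2
    have ht := ih (fun v hv => hl v (by simp [hv]))
    obtain ⟨e, he⟩ := ht
    have : a ++ q <+: (a :: t).flatten ++ q := ⟨e, by simp [← he]⟩
    exact ha.trans this

lemma flatten_length_ge {X : Type*} (p : ℕ) :
    ∀ l : List (List X), (∀ x ∈ l, p ≤ x.length) → l.length * p ≤ l.flatten.length := by
  intro l
  induction l with
  | nil => simp
  | cons a t ih =>
    intro hl
    have := ih (fun x hx => hl x (by simp [hx]))
    have ha := hl a (by simp)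
    simp only [List.flatten_cons, List.length_append, List.length_cons]
    calc (t.length + 1) * p = p + t.length * p := by ring
    _ ≤ a.length + t.flatten.length := Nat.add_le_add ha this

lemma take_eq_of_comp {X : Type*} {A B : List X} (n : ℕ)
    (h : A <+: B ∨ B <+: A) (hA : n ≤ A.length) (hB : n ≤ B.length) :
    A.take n = B.take n := by
  rcases h with ⟨t, rfl⟩ | ⟨t, rfl⟩
  · rw [List.take_append_of_le_length hA]
  · rw [List.take_append_of_le_length hB]

lemma main_aux {X : Type*} (q q0 qb : List X) (hq : q ≠ [])
    (h0 : q0 ∈ Pq q) (hmin : ∀ v ∈ Pq q, q0.length ≤ v.length)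
    (k : ℕ) (hk : q = listPow q0 k ++ qb) (hqb : qb <+: q0) (hqbne : qb ≠ q0)
    (v v' : List X) (hv : v ∈ Pq q) (hv' : v' ∈ StarRoot (Pq q))
    (w w' : List (List X)) (hw : w.length = k+1) (hw' : w'.length = k+1)
    (hwP : ∀ x ∈ w, x ∈ Pq q) (hwP' : ∀ x ∈ w', x ∈ Pq q)
    (hcomp : v ++ w.flatten <+: v' ++ w'.flatten ∨ v' ++ w'.flatten <+: v ++ w.flatten)
    (hlt : v.length < v'.length) : False := by
  set p := q0.length with hp_def
  have hp : 0 < p := List.length_pos_iff.mpr h0.1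
  have hr : qb.length < p :=
    lt_of_le_of_ne hqb.length_le (fun h => hqbne (List.IsPrefix.eq_of_length hqb h))
  have hqlen : q.length = k * p + qb.length := by
    rw [hk]; simp [listPow_length]; exact Or.inl rfl
  have hqlt : q.length < (k+1) * p := by
    have : (k+1) * p = k * p + p := by ring
    omega
  -- lengths of flattened blocks
  have hWlen : q.length ≤ w.flatten.length := by
    have := flatten_length_ge p w (fun x hx => hmin x (hwP x hx))
    rw [hw] at this; omega
  have hWlen' : q.length ≤ w'.flatten.length := by
    have := flatten_length_ge p w' (fun x hx => hmin x (hwP' x hx))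
    rw [hw'] at this; omega
  -- q is a prefix of both flattened blocks
  have hqW : q <+: w.flatten := by
    have h1 := List.prefix_iff_eq_take.mp (flatten_q_prefix q w hwP)
    rw [List.take_append_of_le_length hWlen] at h1
    rw [h1]; exact List.take_prefix _ _
  have hqW' : q <+: w'.flatten := by
    have h1 := List.prefix_iff_eq_take.mp (flatten_q_prefix q w' hwP')
    rw [List.take_append_of_le_length hWlen'] at h1
    rw [h1]; exact List.take_prefix _ _
  -- v is a prefix of v'
  have hvq : v <+: q := hv.2.1
  have hv'q : v' <+: q := hv'.1.2.1
  have hv'len : v'.length ≤ q.length := hv'q.length_le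
  have hvv' : v <+: v' := List.prefix_of_prefix_length_le hvq hv'q (le_of_lt hlt)
  set s := v'.drop v.length with hs_def
  have hslen : s.length = v'.length - v.length := by simp [hs_def]
  have hsne : s ≠ [] := List.ne_nil_of_length_pos (by omega)
  have hvs : v ++ s = v' := List.prefix_iff_eq_append.mp hvv'
  -- s is a prefix of q
  have e1 : q.drop v.length = q.take (q.length - v.length) := by
    have h2 : q = (v ++ q).take q.length := List.prefix_iff_eq_take.mp hv.2.2
    calc q.drop v.length = ((v ++ q).take q.length).drop v.length := by rw [← h2]
    _ = ((v ++ q).drop v.length).take (q.length - v.length) := List.drop_take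
    _ = q.take (q.length - v.length) := by rw [List.drop_left]
  have hsq : s = q.take (v'.length - v.length) := by
    have h2 : v' = q.take v'.length := List.prefix_iff_eq_take.mp hv'q
    calc s = (q.take v'.length).drop v.length := congrArg (List.drop v.length) h2
    _ = (q.drop v.length).take (v'.length - v.length) := List.drop_take
    _ = (q.take (q.length - v.length)).take (v'.length - v.length) := by rw [e1]
    _ = q.take (min (v'.length - v.length) (q.length - v.length)) := by
          rw [List.take_take]
    _ = q.take (v'.length - v.length) := by rw [min_eq_left (by omega)]
  have hsprefix : s <+: q := by rw [hsq]; exact List.take_prefix _ _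
  have hslenle : s.length ≤ q.length := hsprefix.length_le
  -- compare blocks: w.flatten vs s ++ w'.flatten
  have hWcomp : w.flatten <+: s ++ w'.flatten ∨ s ++ w'.flatten <+: w.flatten := by
    have hre : v' ++ w'.flatten = v ++ (s ++ w'.flatten) := by
      rw [← hvs, List.append_assoc]
    rcases hcomp with h | h
    · left; rw [hre] at h; exact (List.prefix_append_right_inj v).mp h
    · right; rw [hre] at h; exact (List.prefix_append_right_inj v).mp h
  have E : w.flatten.take q.length = (s ++ w'.flatten).take q.length :=
    take_eq_of_comp q.length hWcomp hWlen
      (by simp only [List.length_append]; omega)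
  -- left side is q
  have EL : w.flatten.take q.length = q := by
    rw [← List.prefix_iff_eq_take.mp hqW]
  -- right side is s ++ q.take (q.length - s.length)
  have ER : (s ++ w'.flatten).take q.length = s ++ q.take (q.length - s.length) := by
    rw [List.take_append, List.take_of_length_le hslenle]
    congr 1
    have h3 := List.prefix_iff_eq_take.mp hqW'
    calc w'.flatten.take (q.length - s.length)
        = (w'.flatten.take q.length).take (q.length - s.length) := by
          rw [List.take_take, min_eq_left (by omega)]
    _ = q.take (q.length - s.length) := by rw [← h3]
  have hkey : q = s ++ q.take (q.length - s.length) := EL.symm.trans (E.trans ER)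
  -- hence q <+: s ++ q, so s ∈ Pq q
  have hsP : s ∈ Pq q := by
    refine ⟨hsne, hsprefix, ?_⟩
    have h4 : (s ++ q).take q.length = q := by
      rw [List.take_append, List.take_of_length_le hslenle]
      exact hkey.symm
    exact List.prefix_iff_eq_take.mpr h4.symm
  exact hv'.2 ⟨v, s, [], hv, hsP, by simp, by simp [← hvs]⟩

/-- If `q = q₀^k·q̄`, `q̄ ⊏ q₀`, then the star root of `P_q` has delay of
decipherability at most `k + 1`. -/
theorem stmt14 {X : Type*} (q q0 qb : List X) (hq : q ≠ [])
    (h0 : q0 ∈ Pq q) (hmin : ∀ v ∈ Pq q, q0.length ≤ v.length)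
    (k : ℕ) (hk : q = listPow q0 k ++ qb) (hqb : qb <+: q0) (hqbne : qb ≠ q0) :
    ∀ v ∈ StarRoot (Pq q), ∀ v' ∈ StarRoot (Pq q),
      ∀ w w' : List (List X), w.length = k + 1 → w'.length = k + 1 →
        (∀ x ∈ w, x ∈ StarRoot (Pq q)) → (∀ x ∈ w', x ∈ StarRoot (Pq q)) →
        (v ++ w.flatten <+: v' ++ w'.flatten ∨ v' ++ w'.flatten <+: v ++ w.flatten) →
        v = v' := by

  intro v hv v' hv' w w' hw hw' hwS hwS' hcomp
  rcases lt_trichotomy v.length v'.length with h | h | h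
  · exact (main_aux q q0 qb hq h0 hmin k hk hqb hqbne v v' hv.1 hv'
      w w' hw hw' (fun x hx => (hwS x hx).1) (fun x hx => (hwS' x hx).1) hcomp h).elim
  · rw [List.prefix_iff_eq_take.mp hv.1.2.1, List.prefix_iff_eq_take.mp hv'.1.2.1, h]
  · exact (main_aux q q0 qb hq h0 hmin k hk hqb hqbne v' v hv'.1 hv
      w' w hw' hw (fun x hx => (hwS' x hx).1) (fun x hx => (hwS x hx).1) hcomp.symm h).elim
end

section
/- If the length of q_0 (the shortest element of P_q) does not divide |q|, and P_q* is maximal with respect to inclusion among all sets P_{q'}* for nonempty words q', then |q_0| > |q|/2. -/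
section Helpers
variable {X : Type*}

/-- pointwise period -/
def Per (q : List X) (m : ℕ) : Prop :=
  ∀ i : ℕ, ∀ h : i + m < q.length, q[i]'(by omega) = q[i + m]'h

lemma gel {q : List X} {i j : ℕ} (hij : i = j) (h : i < q.length) :
    q[i]'h = q[j]'(hij ▸ h) := by subst hij; rfl

lemma per_of_prefix {q v : List X} (hpre : q <+: v ++ q) : Per q v.length := by
  intro i h
  have h2 : i + v.length < (v ++ q).length := by simp; omega
  have e1 : q[i + v.length]'h = (v ++ q)[i + v.length]'h2 := hpre.getElem h
  have e2 : (v ++ q)[i + v.length]'h2 = q[i + v.length - v.length]'(by omega) :=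
    List.getElem_append_right (by omega)
  have e3 : q[i + v.length - v.length]'(by omega) = q[i]'(by omega) := gel (by omega) _
  rw [e1, e2, e3]

lemma prefix_append_of_per {q : List X} {m : ℕ} (hm : m ≤ q.length) (hper : Per q m) :
    q <+: q.take m ++ q := by
  rw [List.prefix_iff_eq_take]
  apply List.ext_getElem (by simp)
  intro i h1 h2
  have h3 : i < (q.take m ++ q).length := by simp; omega
  rw [List.getElem_take (h := h2)]
  by_cases hi : i < m
  · rw [List.getElem_append_left (by simp; omega) (h' := h3), List.getElem_take]
  · have e1 : (q.take m ++ q)[i]'h3 = q[i - (q.take m).length]'(by simp; omega) :=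
      List.getElem_append_right (by simp; omega)
    have e2 : q[i - (q.take m).length]'(by simp; omega) = q[i - m]'(by omega) :=
      gel (by simp; omega) _
    have e3 : q[i - m]'(by omega) = q[i - m + m]'(by omega) := hper (i - m) (by omega)
    have e4 : q[i - m + m]'(by omega) = q[i]'(by omega) := gel (by omega) _
    rw [e1, e2, e3, e4]

lemma take_mem_Pq {q : List X} {m : ℕ} (h0 : 0 < m) (hm : m ≤ q.length) (hper : Per q m) :
    q.take m ∈ Pq q := by
  refine ⟨?_, List.take_prefix m q, prefix_append_of_per hm hper⟩
  intro h
  have := congrArg List.length h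
  rw [List.length_take] at this
  simp only [List.length_nil] at this
  omega

lemma per_sub {q : List X} {p m : ℕ} (hp : Per q p) (hm : Per q m) (hpm : p ≤ m)
    (hn : p + m ≤ q.length) : Per q (m - p) := by
  intro i h
  by_cases hi : i + m < q.length
  · have e1 : q[i]'(by omega) = q[i + m]'hi := hm i hi
    have e2 : q[i + m - p]'(by omega) = q[i + m - p + p]'(by omega) := hp (i + m - p) (by omega)
    have e3 : q[i + m - p + p]'(by omega) = q[i + m]'hi := gel (by omega) _
    have e4 : q[i + (m - p)]'h = q[i + m - p]'(by omega) := gel (by omega) _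
    rw [e1, e4, e2, e3]
  · have hip : p ≤ i := by omega
    have e1 : q[i - p]'(by omega) = q[i - p + p]'(by omega) := hp (i - p) (by omega)
    have e2 : q[i - p + p]'(by omega) = q[i]'(by omega) := gel (by omega) _
    have e3 : q[i - p]'(by omega) = q[i - p + m]'(by omega) := hm (i - p) (by omega)
    have e4 : q[i - p + m]'(by omega) = q[i + (m - p)]'h := gel (by omega) _
    rw [← e2, ← e1, e3, e4]

lemma per_take {q : List X} {t m : ℕ} (h : Per q m) : Per (q.take t) m := by
  intro i hi
  have hl : i + m < q.length := by
    simp only [List.length_take] at hi; omega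
  have := h i hl
  simp only [List.getElem_take]
  exact this

lemma drop_eq_take_of_per {q : List X} {p : ℕ} (hp : Per q p) (hpn : p ≤ q.length) :
    q.drop p = q.take (q.length - p) := by
  apply List.ext_getElem (by simp)
  intro i h1 h2
  have hi : i < q.length - p := by simpa using h2
  have e1 : (q.drop p)[i]'h1 = q[p + i]'(by omega) := List.getElem_drop
  have e2 : q[i]'(by omega) = q[i + p]'(by omega) := hp i (by omega)
  have e3 : q[i + p]'(by omega) = q[p + i]'(by omega) := gel (by omega) _
  rw [List.getElem_take (h := h2), e1, ← e3, ← e2]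

end Helpers
/-- If `|q₀|` does not divide `|q|` and `P_q^*` is ⊆-maximal among the `P_{q'}^*`,
then `|q₀| > |q|/2`. -/
theorem stmt19 {X : Type*} (q : List X) (hq : q ≠ []) (q0 : List X)
    (h0 : q0 ∈ Pq q) (hmin : ∀ v ∈ Pq q, q0.length ≤ v.length)
    (hdvd : ¬ q0.length ∣ q.length)
    (hmax : ∀ q' : List X, q' ≠ [] →
      {w : List X | InStar (Pq q) w} ⊆ {w : List X | InStar (Pq q') w} →
      {w : List X | InStar (Pq q) w} = {w : List X | InStar (Pq q') w}) :
    q.length < 2 * q0.length := by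
  by_contra hlt
  push_neg at hlt
  obtain ⟨hq0ne, hq0pre, hq0per⟩ := h0
  have hp0 : 0 < q0.length := List.length_pos_iff.mpr hq0ne
  have hpn : q0.length ≤ q.length := hq0pre.length_le
  have hplt : q0.length < q.length := by
    rcases lt_or_eq_of_le hpn with h | h
    · exact h
    · exact absurd (h ▸ dvd_rfl) hdvd
  have hperp : Per q q0.length := per_of_prefix hq0per
  have hq0take : q0 = q.take q0.length := List.prefix_iff_eq_take.mp hq0pre
  -- minimality in terms of Per
  have hminper : ∀ m, 0 < m → m ≤ q.length → Per q m → q0.length ≤ m := by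
    intro m h1 h2 h3
    have := hmin (q.take m) (take_mem_Pq h1 h2 h3)
    rw [List.length_take] at this
    omega
  -- Fine–Wilf style descent: p ∣ m for any period m with p + m ≤ n
  have hdvdper : ∀ m, Per q m → q0.length ≤ m → q0.length + m ≤ q.length → q0.length ∣ m := by
    intro m
    induction m using Nat.strong_induction_on with
    | _ m ih =>
      intro hper hle hsum
      rcases eq_or_lt_of_le hle with he | hlt2
      · exact he ▸ dvd_rfl
      · have hper' : Per q (m - q0.length) := per_sub hperp hper hle hsum
        have h1 : 0 < m - q0.length := by omega
        have h3 := hminper _ h1 (by omega) hper'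
        obtain ⟨c, hc⟩ := ih (m - q0.length) (by omega) hper' h3 (by omega)
        exact ⟨c + 1, by rw [Nat.mul_add, mul_one, ← hc]; omega⟩
  -- no element of (Pq q)* has length n - p
  have hstar_len : ∀ w : List X, InStar (Pq q) w → w.length ≠ q.length - q0.length := by
    rintro w ⟨l, hl, rfl⟩ hlen
    have hdl : ∀ v ∈ l, q0.length ∣ v.length := by
      intro v hv
      obtain ⟨hne, hpre, hper⟩ := hl v hv
      have hv1 : v.length ≤ q.length - q0.length := by
        have h2 : v.length ≤ l.flatten.length := by
          rw [List.length_flatten]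
          exact List.le_sum_of_mem (List.mem_map_of_mem hv)
        omega
      exact hdvdper _ (per_of_prefix hper) (hmin v ⟨hne, hpre, hper⟩) (by omega)
    have hdall : q0.length ∣ l.flatten.length := by
      rw [List.length_flatten]
      apply List.dvd_sum
      intro x hx
      obtain ⟨v, hv, rfl⟩ := List.mem_map.mp hx
      exact hdl v hv
    rw [hlen] at hdall
    apply hdvd
    have h5 := Nat.dvd_add hdall (dvd_refl q0.length)
    rwa [Nat.sub_add_cancel hpn] at h5
  -- the smaller quasiperiod candidate
  set q' : List X := q.take (q.length - q0.length) with hq'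
  have hq'len : q'.length = q.length - q0.length := by
    rw [hq', List.length_take]; omega
  have hq'ne : q' ≠ [] := by
    intro h
    have := congrArg List.length h
    rw [hq'len] at this
    simp only [List.length_nil] at this
    omega
  have hdropeq : q.drop q0.length = q' := (drop_eq_take_of_per hperp hpn)
  have hnp : q0.length ≤ q.length - q0.length := by omega
  -- generators of Pq q are in (Pq q')*
  have hgen : ∀ v ∈ Pq q, InStar (Pq q') v := by
    rintro v ⟨hvne, hvpre, hvper⟩
    have hm : Per q v.length := per_of_prefix hvper
    have hvpl : q0.length ≤ v.length := hmin v ⟨hvne, hvpre, hvper⟩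
    have hvq : v = q.take v.length := List.prefix_iff_eq_take.mp hvpre
    have hvlen : v.length ≤ q.length := hvpre.length_le
    by_cases hc : v.length ≤ q.length - q0.length
    · have etake : q'.take v.length = v := by
        rw [hq', List.take_take, min_eq_left hc]; exact hvq.symm
      have hvPq : v ∈ Pq q' := by
        refine ⟨hvne, ?_, ?_⟩
        · rw [← etake]; exact List.take_prefix _ _
        · have hper' : Per q' v.length := per_take hm
          have := prefix_append_of_per (by rw [hq'len]; exact hc) hper'
          rwa [etake] at this
      refine ⟨[v], ?_, by simp⟩
      intro u hu
      simp only [List.mem_singleton] at hu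
      subst hu
      exact hvPq
    · push_neg at hc
      set v' : List X := q'.take (v.length - q0.length) with hv'
      have hmgt : q0.length < v.length := by omega
      have hv'len : v'.length = v.length - q0.length := by
        rw [hv', List.length_take, hq'len]; omega
      have hsplit : v = q0 ++ v' := by
        have h1 : q.take v.length
            = q.take q0.length ++ (q.drop q0.length).take (v.length - q0.length) := by
          rw [← List.take_add]; congr 1; omega
        rw [hvq, h1, ← hq0take, hdropeq, ← hv']
      have hq0mem : q0 ∈ Pq q' := by
        have etake : q'.take q0.length = q0 := by
          rw [hq', List.take_take, min_eq_left hnp]; exact hq0take.symm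
        refine ⟨hq0ne, ?_, ?_⟩
        · rw [← etake]; exact List.take_prefix _ _
        · have hper' : Per q' q0.length := per_take hperp
          have := prefix_append_of_per (by rw [hq'len]; exact hnp) hper'
          rwa [etake] at this
      have hperq' : Per q' (v.length - q0.length) := by
        intro i hi
        rw [hq'len] at hi
        have him : i + v.length < q.length := by omega
        simp only [hq', List.getElem_take]
        have e1 : q[i]'(by omega) = q[i + v.length]'him := hm i him
        have e2 : q[i + v.length - q0.length]'(by omega)
            = q[i + v.length - q0.length + q0.length]'(by omega) :=
          hperp (i + v.length - q0.length) (by omega)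
        have e3 : q[i + v.length - q0.length + q0.length]'(by omega) = q[i + v.length]'him :=
          gel (by omega) _
        have e4 : q[i + (v.length - q0.length)]'(by omega)
            = q[i + v.length - q0.length]'(by omega) := gel (by omega) _
        rw [e1, e4, e2, e3]
      have hv'mem : v' ∈ Pq q' := by
        refine ⟨?_, by rw [hv']; exact List.take_prefix _ _, ?_⟩
        · intro h
          have := congrArg List.length h
          rw [hv'len] at this
          simp only [List.length_nil] at this
          omega
        · have := prefix_append_of_per (m := v.length - q0.length)
            (by rw [hq'len]; omega) hperq'
          rwa [← hv'] at this
      refine ⟨[q0, v'], ?_, by simp [hsplit]⟩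
      intro u hu
      simp only [List.mem_cons, List.mem_singleton, List.not_mem_nil, or_false] at hu
      rcases hu with rfl | rfl
      · exact hq0mem
      · exact hv'mem
  -- closure to the star
  have hsub : {w : List X | InStar (Pq q) w} ⊆ {w : List X | InStar (Pq q') w} := by
    have key : ∀ l : List (List X), (∀ v ∈ l, v ∈ Pq q) → InStar (Pq q') l.flatten := by
      intro l
      induction l with
      | nil => exact fun _ => ⟨[], by simp, by simp⟩
      | cons a t ih =>
        intro hl
        obtain ⟨la, hla, ha⟩ := hgen a (hl a (by simp))
        obtain ⟨lt, hlt', ht⟩ := ih (fun v hv => hl v (by simp [hv]))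
        refine ⟨la ++ lt, ?_, by simp [ha, ht]⟩
        intro v hv
        rcases List.mem_append.mp hv with h | h
        · exact hla v h
        · exact hlt' v h
    rintro w ⟨l, hl, rfl⟩
    exact key l hl
  have heq := hmax q' hq'ne hsub
  have hq'mem : q' ∈ {w : List X | InStar (Pq q') w} := by
    refine ⟨[q'], ?_, by simp⟩
    intro u hu
    simp only [List.mem_singleton] at hu
    subst hu
    exact ⟨hq'ne, List.prefix_refl _, List.prefix_append _ _⟩
  rw [← heq] at hq'mem
  exact hstar_len q' hq'mem hq'len
end
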